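/- Let m be a nonnegative integer such that the Fermat number F_m = 2^(2^m) + 1 is prime, let k be an even positive integer divisible by F_m, and let r be a positive integer such that both (F_m − 1)·r + 1 and F_m·r + 1 are prime and neither of them divides k. Then n = (F_m − 1)·(F_m·r + 1)·k satisfies φ(n+k) = φ(n), where φ denotes Euler's totient function. -/
import Mathlib

lemma pow_two_totient_aux (a k : ℕ) (hk : 2 ∣ k) :
    (2 ^ a * k).totient = 2 ^ a * k.totient := by
  induction a with
  | zero => simp
  | succ n ih =>
    have h2 : 2 ∣ 2 ^ n * k := hk.mul_left _
    rw [pow_succ, mul_comm (2 ^ n) 2, mul_assoc,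
      Nat.totient_mul_of_prime_of_dvd Nat.prime_two h2, ih]
    ring

theorem fermat_prime_solution_even_k_dvd
    (m k r : ℕ) (hF : Nat.Prime (2 ^ 2 ^ m + 1))
    (hk : 0 < k) (hke : Even k) (hdvd : (2 ^ 2 ^ m + 1) ∣ k)
    (hr : 0 < r)
    (hp1 : Nat.Prime (2 ^ 2 ^ m * r + 1))
    (hp2 : Nat.Prime ((2 ^ 2 ^ m + 1) * r + 1))
    (hnd1 : ¬ (2 ^ 2 ^ m * r + 1) ∣ k)
    (hnd2 : ¬ ((2 ^ 2 ^ m + 1) * r + 1) ∣ k) :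
    Nat.totient (2 ^ 2 ^ m * ((2 ^ 2 ^ m + 1) * r + 1) * k + k) =
      Nat.totient (2 ^ 2 ^ m * ((2 ^ 2 ^ m + 1) * r + 1) * k) := by
  have hk2 : 2 ∣ k := hke.two_dvd
  have h1 : 1 ≤ 2 ^ 2 ^ m := Nat.one_le_two_pow
  have hkey : 2 ^ 2 ^ m * ((2 ^ 2 ^ m + 1) * r + 1) * k + k =
      (2 ^ 2 ^ m + 1) * ((2 ^ 2 ^ m * r + 1) * k) := by ring
  rw [hkey]
  have hFd : (2 ^ 2 ^ m + 1) ∣ (2 ^ 2 ^ m * r + 1) * k := hdvd.mul_left _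
  rw [Nat.totient_mul_of_prime_of_dvd hF hFd]
  have hc1 : Nat.Coprime (2 ^ 2 ^ m * r + 1) k :=
    (Nat.Prime.coprime_iff_not_dvd hp1).mpr hnd1
  rw [Nat.totient_mul hc1, Nat.totient_prime hp1]
  have hre : 2 ^ 2 ^ m * ((2 ^ 2 ^ m + 1) * r + 1) * k =
      ((2 ^ 2 ^ m + 1) * r + 1) * (2 ^ 2 ^ m * k) := by ring
  rw [hre]
  have hc2 : Nat.Coprime ((2 ^ 2 ^ m + 1) * r + 1) (2 ^ 2 ^ m * k) := by
    apply (Nat.Prime.coprime_iff_not_dvd hp2).mpr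
    intro h
    rcases (Nat.Prime.dvd_mul hp2).mp h with h | h
    · have h2 : ((2 ^ 2 ^ m + 1) * r + 1) ∣ 2 := hp2.dvd_of_dvd_pow h
      have := Nat.le_of_dvd two_pos h2
      nlinarith
    · exact hnd2 h
  rw [Nat.totient_mul hc2, Nat.totient_prime hp2, pow_two_totient_aux _ _ hk2]
  have e1 : 2 ^ 2 ^ m * r + 1 - 1 = 2 ^ 2 ^ m * r := by omega
  have e2 : (2 ^ 2 ^ m + 1) * r + 1 - 1 = (2 ^ 2 ^ m + 1) * r := by omega
  rw [e1, e2]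
  ring
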